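/- arXiv:2410.14346 — 3 statements merged into one kernel-verified Lean document; each statement's English description precedes it below -/
import Mathlib

section
/- Let τ be a Möbius transformation of 𝔻 (a biholomorphic automorphism of the unit disk). Then for all z₁, z₂ on the unit circle 𝕋 one has |τ(z₁) − τ(z₂)|² = |z₁ − z₂|² · |τ'(z₁)| · |τ'(z₂)|. -/
open MeasureTheory Set Complex Real

noncomputable section

/-- The point on the unit circle `𝕋` with angle `θ`. -/
def circ (θ : ℝ) : ℂ := Complex.exp (θ * Complex.I)

/-- The closed arc of the unit circle traversed counterclockwise from `circ a` to `circ b`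
(parametrized by the angle interval `[a, b]`). -/
def arcSet (a b : ℝ) : Set ℂ := circ '' Set.Icc a b

/-- The `H^{1/2}` kernel (in the angle parametrization) of a function `v : ℝ → ℝ` defined
on (an angle interval parametrizing) an arc of the unit circle. -/
def hKernel (v : ℝ → ℝ) (p : ℝ × ℝ) : ℝ :=
  |v p.1 - v p.2| ^ 2 / (‖circ p.1 - circ p.2‖) ^ 2

/-- `v : ℝ → ℝ`, viewed as a function on the arc parametrized by the angle interval `[a,b]`,
belongs to `H^{1/2}` of the arc: it is integrable and the `H^{1/2}` double integral is finite. -/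
def MemHhalfParam (a b : ℝ) (v : ℝ → ℝ) : Prop :=
  IntegrableOn v (Set.Icc a b) volume ∧
    IntegrableOn (hKernel v) (Set.Icc a b ×ˢ Set.Icc a b) volume

/-- `u`, a function on the arc of the circle parametrized by the angle interval `[a,b]`,
belongs to `H^{1/2}` of that arc. -/
def MemHhalfOn (a b : ℝ) (u : ℂ → ℝ) : Prop :=
  MemHhalfParam a b (fun θ => u (circ θ))

/-- A Möbius transformation of the unit disk `𝔻` (a biholomorphic automorphism of `𝔻`). -/
def IsDiskMobius (τ : ℂ → ℂ) : Prop :=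
  ∃ ε w : ℂ, ‖ε‖ = 1 ∧ ‖w‖ < 1 ∧
    ∀ z : ℂ, τ z = ε * (z - w) / (1 - (starRingEnd ℂ) w * z)

/-- `G` is a (continuous, strictly increasing, `2π`-equivariant) lift of the
sense-preserving circle homeomorphism `φ`. -/
def IsCircleHomeoLift (φ : ℂ → ℂ) (G : ℝ → ℝ) : Prop :=
  Continuous G ∧ StrictMono G ∧ (∀ θ, G (θ + 2 * π) = G θ + 2 * π) ∧
    ∀ θ, φ (circ θ) = circ (G θ)

/-- The lift `H` (in the angle parametrization, on `[a,b]`) of a homeomorphism between arcs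
of the circle is absolutely continuous with derivative `d`, and `log |d|` (that is,
`log |h'|`) belongs to `H^{1/2}` of the arc: this is the Weil–Petersson class. -/
def WPData (a b : ℝ) (H d : ℝ → ℝ) : Prop :=
  IntegrableOn d (Set.Icc a b) volume ∧
    (∀ θ ∈ Set.Icc a b, H θ = H a + ∫ s in a..θ, d s) ∧
    MemHhalfParam a b (fun θ => Real.log |d θ|)

/-- A sense-preserving homeomorphism `φ` of the unit circle belongs to the Weil–Petersson
class `WP(𝕋)`: it has an absolutely continuous lift whose derivative `d` is `2π`-periodic
and integrable, with `log |d| ∈ H^{1/2}(𝕋)`. -/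
def WPCircle (φ : ℂ → ℂ) : Prop :=
  ∃ G d : ℝ → ℝ, IsCircleHomeoLift φ G ∧
    IntegrableOn d (Set.Icc 0 (2 * π)) volume ∧ (∀ θ, d (θ + 2 * π) = d θ) ∧
    (∀ θ, G θ = G 0 + ∫ s in (0:ℝ)..θ, d s) ∧
    MemHhalfParam 0 (2 * π) (fun θ => Real.log |d θ|)

/-- `φ` is quasisymmetric on the arc parametrized by the angle interval `[a,b]`. -/
def QSOn (a b : ℝ) (φ : ℂ → ℂ) : Prop :=
  ∃ C : ℝ, 1 ≤ C ∧ ∀ x y z : ℝ, a ≤ x → x ≤ y → y ≤ z → z ≤ b →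
    ‖circ x - circ y‖ = ‖circ y - circ z‖ →
    C⁻¹ ≤ ‖φ (circ x) - φ (circ y)‖ / ‖φ (circ y) - φ (circ z)‖ ∧
      ‖φ (circ x) - φ (circ y)‖ / ‖φ (circ y) - φ (circ z)‖ ≤ C

/-- `φ` is quasisymmetric on the whole circle: the quasisymmetry inequality holds for any
three points lying in this order on some arc of `𝕋`. -/
def QSCircle (φ : ℂ → ℂ) : Prop :=
  ∃ C : ℝ, 1 ≤ C ∧ ∀ x y z : ℝ, x ≤ y → y ≤ z → z ≤ x + 2 * π →
    ‖circ x - circ y‖ = ‖circ y - circ z‖ →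
    C⁻¹ ≤ ‖φ (circ x) - φ (circ y)‖ / ‖φ (circ y) - φ (circ z)‖ ∧
      ‖φ (circ x) - φ (circ y)‖ / ‖φ (circ y) - φ (circ z)‖ ≤ C

end

/-- For a Möbius transformation `τ` of the unit disk and points `z₁`, `z₂`
on the unit circle, `|τ(z₁) - τ(z₂)|² = |z₁ - z₂|² · |τ'(z₁)| · |τ'(z₂)|`. -/
theorem stmt_5 (τ : ℂ → ℂ) (hτ : IsDiskMobius τ) (z₁ z₂ : ℂ)
    (h₁ : ‖z₁‖ = 1) (h₂ : ‖z₂‖ = 1) :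
    (‖τ z₁ - τ z₂‖) ^ 2
      = (‖z₁ - z₂‖) ^ 2 * ‖deriv τ z₁‖ * ‖deriv τ z₂‖ := by
  obtain ⟨ε, w, hε, hw, hform⟩ := hτ
  set c := (starRingEnd ℂ) w with hc
  have hd : ∀ z : ℂ, ‖z‖ = 1 → (1 - c * z) ≠ 0 := by
    intro z hz h
    have h1 : c * z = 1 := by linear_combination -h
    have : ‖c * z‖ = 1 := by rw [h1]; simp
    rw [norm_mul, hc, Complex.norm_conj, hz, mul_one] at this
    exact absurd this (ne_of_lt hw)
  have hτfun : τ = fun z => ε * (z - w) / (1 - c * z) := funext hform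
  have hderiv : ∀ z : ℂ, ‖z‖ = 1 →
      deriv τ z = ε * (1 - c * w) / (1 - c * z) ^ 2 := by
    intro z hz
    have h1 : HasDerivAt (fun z : ℂ => ε * (z - w)) ε z := by
      simpa using ((hasDerivAt_id z).sub_const w).const_mul ε
    have h2 : HasDerivAt (fun z : ℂ => 1 - c * z) (-c) z := by
      simpa using ((hasDerivAt_id z).const_mul c).const_sub 1
    have h3 := h1.div h2 (hd z hz)
    rw [hτfun, show (fun z => ε * (z - w) / (1 - c * z)) = (fun z : ℂ => ε * (z - w)) / (fun z => 1 - c * z) from rfl, h3.deriv]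
    rw [div_eq_div_iff (pow_ne_zero 2 (hd z hz)) (pow_ne_zero 2 (hd z hz))]
    ring
  have hdiff : τ z₁ - τ z₂
      = ε * (z₁ - z₂) * (1 - c * w) / ((1 - c * z₁) * (1 - c * z₂)) := by
    rw [hform, hform, div_sub_div _ _ (hd z₁ h₁) (hd z₂ h₂),
      div_eq_div_iff (mul_ne_zero (hd z₁ h₁) (hd z₂ h₂))
        (mul_ne_zero (hd z₁ h₁) (hd z₂ h₂))]
    ring
  rw [hdiff, hderiv z₁ h₁, hderiv z₂ h₂]
  simp only [norm_div, norm_mul, norm_pow, hε, one_mul]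
  have e₁ : ‖1 - c * z₁‖ ≠ 0 := by simpa [sub_eq_zero] using hd z₁ h₁
  have e₂ : ‖1 - c * z₂‖ ≠ 0 := by simpa [sub_eq_zero] using hd z₂ h₂
  field_simp
end

section
/- Let v : ⟨−i,i⟩ → ℝ be integrable with ∬_{⟨−i,i⟩×⟨−i,i⟩} |v(z₁)−v(z₂)|²/|z₁−z₂|² |dz₁||dz₂| < ∞, and define v̂ on the left half-circle ⟨i,−i⟩ by v̂(z) = v(−conj(z)). Then ∬_{⟨i,−i⟩×⟨−i,i⟩} |v̂(z₁) − v(z₂)|² / |z₁ − z₂|² |dz₁||dz₂| ≤ ∬_{⟨−i,i⟩×⟨−i,i⟩} |v(z₁) − v(z₂)|² / |z₁ − z₂|² |dz₁||dz₂|; in particular this mixed double integral is finite. -/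
open MeasureTheory Set Complex Real

lemma circ_reflect (θ : ℝ) : -(starRingEnd ℂ) (circ θ) = circ (π - θ) := by
  simp only [circ, ← Complex.exp_conj, map_mul, Complex.conj_I, Complex.conj_ofReal]
  rw [show ((π - θ : ℝ) : ℂ) * Complex.I = π * Complex.I + θ * (-Complex.I) by push_cast; ring,
    Complex.exp_add, Complex.exp_pi_mul_I]
  ring

lemma circ_dist_sq (a b : ℝ) :
    (‖circ a - circ b‖) ^ 2 = 2 - 2 * Real.cos (a - b) := by
  rw [Complex.sq_norm, Real.cos_sub]
  simp only [circ, Complex.exp_mul_I, Complex.normSq_apply, Complex.sub_re, Complex.sub_im,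
    Complex.add_re, Complex.add_im, Complex.mul_re, Complex.mul_im, Complex.I_re, Complex.I_im,
    Complex.ofReal_re, Complex.ofReal_im, Complex.cos_ofReal_re, Complex.sin_ofReal_re,
    Complex.cos_ofReal_im, Complex.sin_ofReal_im]
  nlinarith [Real.sin_sq_add_cos_sq a, Real.sin_sq_add_cos_sq b]

lemma key (v : ℂ → ℝ) (θ₁ θ₂ : ℝ) (h1 : θ₁ ∈ Set.Icc (π/2) (3*π/2))
    (h2 : θ₂ ∈ Set.Icc (-(π/2)) (π/2)) :
    |v (-(starRingEnd ℂ) (circ θ₁)) - v (circ θ₂)| ^ 2 /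
      (‖circ θ₁ - circ θ₂‖) ^ 2 ≤
    hKernel (fun θ => v (circ θ)) (π - θ₁, θ₂) := by
  rw [circ_reflect, hKernel]
  have hc1 : Real.cos θ₁ ≤ 0 := by
    apply Real.cos_nonpos_of_pi_div_two_le_of_le h1.1
    have := h1.2; linarith
  have hc2 : 0 ≤ Real.cos θ₂ := Real.cos_nonneg_of_mem_Icc h2
  have hden : (‖circ (π - θ₁) - circ θ₂‖) ^ 2 ≤
      (‖circ θ₁ - circ θ₂‖) ^ 2 := by
    rw [circ_dist_sq, circ_dist_sq]
    have e1 : Real.cos (π - θ₁ - θ₂) = -Real.cos (θ₁ + θ₂) := by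
      rw [show π - θ₁ - θ₂ = π - (θ₁ + θ₂) by ring, Real.cos_pi_sub]
    have e2 : Real.cos (θ₁ - θ₂) + Real.cos (θ₁ + θ₂) = 2 * Real.cos θ₁ * Real.cos θ₂ := by
      rw [Real.cos_sub, Real.cos_add]; ring
    nlinarith [mul_nonneg hc2 (neg_nonneg.mpr hc1)]
  rcases eq_or_lt_of_le (sq_nonneg (‖circ (π - θ₁) - circ θ₂‖)) with h0 | h0
  · have heq : circ (π - θ₁) = circ θ₂ := by
      have habs : ‖circ (π - θ₁) - circ θ₂‖ = 0 :=
        (pow_eq_zero_iff two_ne_zero).mp h0.symm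
      exact sub_eq_zero.mp (norm_eq_zero.mp habs)
    rw [heq]
    simp
  · exact div_le_div_of_nonneg_left (by positivity) h0 hden

noncomputable def reflEquiv : ℝ ≃ᵐ ℝ where
  toEquiv := ⟨fun x => π - x, fun x => π - x, fun x => by ring_nf, fun x => by ring_nf⟩
  measurable_toFun := measurable_const.sub measurable_id
  measurable_invFun := measurable_const.sub measurable_id

noncomputable def reflProd : ℝ × ℝ ≃ᵐ ℝ × ℝ :=
  MeasurableEquiv.prodCongr reflEquiv (MeasurableEquiv.refl ℝ)

lemma reflProd_mp : MeasurePreserving (reflProd) volume volume := by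
  exact (Measure.measurePreserving_sub_left volume π).prod (MeasurePreserving.id volume)

lemma refl_preimage :
    (reflProd) ⁻¹' (Set.Icc (-(π/2)) (π/2) ×ˢ Set.Icc (-(π/2)) (π/2)) =
      Set.Icc (π/2) (3*π/2) ×ˢ Set.Icc (-(π/2)) (π/2) := by
  ext p
  simp only [reflProd, reflEquiv, MeasurableEquiv.prodCongr, Set.mem_preimage, Set.mem_prod,
    Set.mem_Icc, MeasurableEquiv.coe_mk, Equiv.prodCongr_apply, Equiv.coe_fn_mk, Prod.map,
    Equiv.refl_apply]
  constructor
  · rintro ⟨⟨a, b⟩, c⟩; exact ⟨⟨by linarith, by linarith⟩, c⟩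
  · rintro ⟨⟨a, b⟩, c⟩; exact ⟨⟨by linarith, by linarith⟩, c⟩

/-- Let `v` be integrable on the right half-circle `⟨-i,i⟩` (parametrized
by the angle interval `[-π/2, π/2]`) with finite `H^{1/2}` double integral, and let
`v̂(z) = v(-conj z)` on the left half-circle `⟨i,-i⟩` (parametrized by `[π/2, 3π/2]`). Then
the mixed double integral `∬_{⟨i,-i⟩×⟨-i,i⟩} |v̂(z₁) - v(z₂)|²/|z₁-z₂|² |dz₁||dz₂|` is
bounded by the `H^{1/2}` double integral of `v` over `⟨-i,i⟩ × ⟨-i,i⟩`; in particular it is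
finite. -/
theorem stmt_9 (v : ℂ → ℝ)
    (hv : IntegrableOn (fun θ => v (circ θ)) (Set.Icc (-(π/2)) (π/2)) volume)
    (hfin : (∫⁻ p in Set.Icc (-(π/2)) (π/2) ×ˢ Set.Icc (-(π/2)) (π/2),
        ENNReal.ofReal (hKernel (fun θ => v (circ θ)) p)) < ⊤) :
    (∫⁻ p in Set.Icc (π/2) (3*π/2) ×ˢ Set.Icc (-(π/2)) (π/2),
        ENNReal.ofReal (|v (-(starRingEnd ℂ) (circ p.1)) - v (circ p.2)| ^ 2 /
          (‖circ p.1 - circ p.2‖) ^ 2))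
      ≤ (∫⁻ p in Set.Icc (-(π/2)) (π/2) ×ˢ Set.Icc (-(π/2)) (π/2),
          ENNReal.ofReal (hKernel (fun θ => v (circ θ)) p)) ∧
    (∫⁻ p in Set.Icc (π/2) (3*π/2) ×ˢ Set.Icc (-(π/2)) (π/2),
        ENNReal.ofReal (|v (-(starRingEnd ℂ) (circ p.1)) - v (circ p.2)| ^ 2 /
          (‖circ p.1 - circ p.2‖) ^ 2)) < ⊤ := by
  have hS : MeasurableSet (Set.Icc (π/2) (3*π/2) ×ˢ Set.Icc (-(π/2)) (π/2)) :=
    (measurableSet_Icc.prod measurableSet_Icc)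
  have step1 : (∫⁻ p in Set.Icc (π/2) (3*π/2) ×ˢ Set.Icc (-(π/2)) (π/2),
        ENNReal.ofReal (|v (-(starRingEnd ℂ) (circ p.1)) - v (circ p.2)| ^ 2 /
          (‖circ p.1 - circ p.2‖) ^ 2))
      ≤ ∫⁻ p in Set.Icc (π/2) (3*π/2) ×ˢ Set.Icc (-(π/2)) (π/2),
          ENNReal.ofReal (hKernel (fun θ => v (circ θ)) (reflProd p)) := by
    refine lintegral_mono_ae ?_
    filter_upwards [ae_restrict_mem hS] with p hp
    rcases hp with ⟨hp1, hp2⟩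
    exact ENNReal.ofReal_le_ofReal (key v p.1 p.2 hp1 hp2)
  have step2 : (∫⁻ p in Set.Icc (π/2) (3*π/2) ×ˢ Set.Icc (-(π/2)) (π/2),
        ENNReal.ofReal (hKernel (fun θ => v (circ θ)) (reflProd p)))
      = ∫⁻ p in Set.Icc (-(π/2)) (π/2) ×ˢ Set.Icc (-(π/2)) (π/2),
          ENNReal.ofReal (hKernel (fun θ => v (circ θ)) p) := by
    rw [← refl_preimage]
    exact reflProd_mp.setLIntegral_comp_preimage_emb reflProd.measurableEmbedding
      (fun p => ENNReal.ofReal (hKernel (fun θ => v (circ θ)) p)) _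
  refine ⟨step1.trans step2.le, lt_of_le_of_lt (step1.trans step2.le) hfin⟩
end

section
/- Let β ∈ (−1,1), set c = (((1−β)/(1+β))² + 1)^{−1/2} and t = (1−c)/(1+c), and define h = m ∘ s ∘ m where m(z) = (1−z)/(1+z) and s(z) = c·√(z²+1) with the principal branch of the square root. Then h is a holomorphic injective map of the open unit disk 𝔻 onto the slit disk D_t = 𝔻 \ [t,1), it satisfies h(β) = 0 and h(1) = t (boundary value at z = 1), and its continuous boundary extension satisfies h(i) = h(−i) = 1. -/
open MeasureTheory Set Complex Real

/-- The Möbius transformation `m(z) = (1-z)/(1+z)`, carrying `𝔻` onto the right half-plane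
and vice versa. -/
noncomputable def mSlit (z : ℂ) : ℂ := (1 - z) / (1 + z)

/-- The map `s(z) = c·√(z² + 1)` (principal branch of the square root). -/
noncomputable def sSlit (c : ℝ) (z : ℂ) : ℂ := (c : ℂ) * (z ^ 2 + 1) ^ (1 / 2 : ℂ)

/-- The conformal map `h = m ∘ s ∘ m` of `𝔻` onto the slit disk `D_t = 𝔻 \ [t, 1)`. -/
noncomputable def hSlit (c : ℝ) (z : ℂ) : ℂ := mSlit (sSlit c (mSlit z))

section SlitHelpers
open Complex

lemma sq_half_cpow (u : ℂ) : (u ^ (1/2 : ℂ)) ^ 2 = u := by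
  rcases eq_or_ne u 0 with rfl | hu
  · simp [Complex.zero_cpow (by norm_num : (1/2:ℂ) ≠ 0)]
  · rw [sq, ← Complex.cpow_add _ _ hu]
    norm_num

lemma re_half_cpow_pos {u : ℂ} (hu : u ∈ Complex.slitPlane) : 0 < (u ^ (1/2:ℂ)).re := by
  have hu0 : u ≠ 0 := Complex.slitPlane_ne_zero hu
  rw [Complex.cpow_def_of_ne_zero hu0, Complex.exp_re]
  have harg : (Complex.log u * (1/2 : ℂ)).im = (Complex.arg u) / 2 := by
    simp [Complex.mul_im, Complex.log_im]; ring
  rw [harg]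
  have h1 : Complex.arg u ≠ Real.pi := (Complex.mem_slitPlane_iff_arg.mp hu).1
  have h2 := Complex.arg_le_pi u
  have h3 := Complex.neg_pi_lt_arg u
  have hc : 0 < Real.cos (Complex.arg u / 2) := by
    apply Real.cos_pos_of_mem_Ioo
    constructor <;> [linarith; · have := lt_of_le_of_ne h2 h1; linarith]
  positivity

lemma one_add_ne_of_re_pos {w : ℂ} (hw : 0 < w.re) : 1 + w ≠ 0 := by
  intro h
  have : (1 + w).re = 0 := by rw [h]; simp
  simp only [Complex.add_re, Complex.one_re] at this
  linarith

lemma one_add_ne_of_abs_lt_one {z : ℂ} (hz : ‖z‖ < 1) : 1 + z ≠ 0 := by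
  intro h
  have hz1 : z = -1 := by linear_combination h
  rw [hz1] at hz
  simp at hz

lemma mSlit_mSlit {z : ℂ} (hz : 1 + z ≠ 0) : mSlit (mSlit z) = z := by
  unfold mSlit
  have h1 : 1 + (1 - z) / (1 + z) = 2 / (1 + z) := by field_simp; ring
  have h2 : 1 - (1 - z) / (1 + z) = 2 * z / (1 + z) := by field_simp; ring
  rw [h1, h2]
  rw [div_div_div_cancel_right₀]
  · ring_nf
  · exact hz

lemma re_mSlit_pos {z : ℂ} (hz : ‖z‖ < 1) : 0 < (mSlit z).re := by
  have h1 : 1 + z ≠ 0 := one_add_ne_of_abs_lt_one hz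
  have hn : Complex.normSq z < 1 := by
    rw [← Complex.sq_norm]; nlinarith [norm_nonneg z]
  have hd : 0 < Complex.normSq (1 + z) := Complex.normSq_pos.mpr h1
  rw [mSlit, Complex.div_re, ← add_div]
  have hnum : (1 - z).re * (1 + z).re + (1 - z).im * (1 + z).im = 1 - Complex.normSq z := by
    simp [Complex.normSq_apply, Complex.sub_re, Complex.sub_im, Complex.add_re, Complex.add_im]
    ring
  rw [hnum]
  have h1n : 0 < 1 - Complex.normSq z := by linarith
  positivity

lemma abs_mSlit_lt_one {w : ℂ} (hw : 0 < w.re) : ‖mSlit w‖ < 1 := by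
  have h1 : 1 + w ≠ 0 := one_add_ne_of_re_pos hw
  have hlt : Complex.normSq (1 - w) < Complex.normSq (1 + w) := by
    simp only [Complex.normSq_apply, Complex.sub_re, Complex.sub_im, Complex.add_re,
      Complex.add_im, Complex.one_re, Complex.one_im]
    nlinarith
  have hpos : 0 < ‖1 + w‖ := norm_pos_iff.mpr h1
  rw [mSlit, norm_div, div_lt_one hpos]
  rw [Complex.norm_def, Complex.norm_def]
  exact Real.sqrt_lt_sqrt (Complex.normSq_nonneg _) hlt

end SlitHelpers

lemma sq_mem_slitPlane {w : ℂ} (hw : 0 < w.re) : w ^ 2 ∈ Complex.slitPlane := by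
  rw [Complex.mem_slitPlane_iff]
  rcases eq_or_ne w.im 0 with hy | hy
  · left
    have : (w ^ 2).re = w.re ^ 2 - w.im ^ 2 := by
      rw [sq, Complex.mul_re]; ring
    rw [this, hy]; nlinarith
  · right
    have : (w ^ 2).im = 2 * w.re * w.im := by rw [sq, Complex.mul_im]; ring
    rw [this]
    positivity

lemma sq_add_one_mem_slitPlane {w : ℂ} (hw : 0 < w.re) :
    w ^ 2 + 1 ∈ Complex.slitPlane := by
  rw [Complex.mem_slitPlane_iff]
  rcases eq_or_ne w.im 0 with hy | hy
  · left
    have : (w ^ 2 + 1).re = w.re ^ 2 - w.im ^ 2 + 1 := by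
      rw [Complex.add_re, sq, Complex.mul_re, Complex.one_re]; ring
    rw [this, hy]; nlinarith
  · right
    have : (w ^ 2 + 1).im = 2 * w.re * w.im := by
      rw [Complex.add_im, sq, Complex.mul_im, Complex.one_im]; ring
    rw [this]
    positivity

lemma half_cpow_sq {w : ℂ} (hw : 0 < w.re) : (w ^ 2) ^ (1/2 : ℂ) = w := by
  set q := (w ^ 2) ^ (1/2 : ℂ) with hq
  have hq2 : q ^ 2 = w ^ 2 := sq_half_cpow _
  have hqre : 0 < q.re := re_half_cpow_pos (sq_mem_slitPlane hw)
  have hfac : (q - w) * (q + w) = 0 := by linear_combination hq2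
  rcases mul_eq_zero.mp hfac with h | h
  · linear_combination h
  · exfalso
    have : (q + w).re = 0 := by rw [h]; simp
    simp only [Complex.add_re] at this
    linarith

lemma re_sSlit_pos {c : ℝ} (hc : 0 < c) {w : ℂ} (hw : 0 < w.re) :
    0 < (sSlit c w).re := by
  have h := re_half_cpow_pos (sq_add_one_mem_slitPlane hw)
  rw [sSlit]
  rw [Complex.re_ofReal_mul]
  positivity


lemma div_ofReal_im' (z : ℂ) (x : ℝ) : (z / x).im = z.im / x := by
  simp

lemma sq_ne_real_nonpos {w : ℂ} (hw : 0 < w.re) {x : ℝ} (hx : x ≤ 0) :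
    w ^ 2 ≠ (x : ℂ) := by
  intro h
  have him : w.re * w.im + w.im * w.re = 0 := by
    have := congrArg Complex.im h
    rwa [sq, Complex.mul_im, Complex.ofReal_im] at this
  have hy : w.im = 0 := by
    have h2 : w.re * w.im = 0 := by linarith
    rcases mul_eq_zero.mp h2 with h' | h'
    · exact absurd h' hw.ne'
    · exact h'
  have hre : w.re * w.re - w.im * w.im = x := by
    have := congrArg Complex.re h
    rwa [sq, Complex.mul_re, Complex.ofReal_re] at this
  rw [hy] at hre
  nlinarith

lemma mSlit_differentiableAt {z : ℂ} (hz : 1 + z ≠ 0) : DifferentiableAt ℂ mSlit z := by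
  show DifferentiableAt ℂ (fun z : ℂ => (1 - z) / (1 + z)) z
  exact ((differentiableAt_const _).sub differentiableAt_id).div
    ((differentiableAt_const _).add differentiableAt_id) hz

lemma mSlit_continuousAt {z : ℂ} (hz : 1 + z ≠ 0) : ContinuousAt mSlit z := by
  show ContinuousAt (fun z : ℂ => (1 - z) / (1 + z)) z
  exact (continuousAt_const.sub continuousAt_id).div
    (continuousAt_const.add continuousAt_id) hz

lemma sSlit_differentiableAt {c : ℝ} {w : ℂ} (hw : 0 < w.re) :
    DifferentiableAt ℂ (sSlit c) w := by
  show DifferentiableAt ℂ (fun w : ℂ => (c : ℂ) * (w ^ 2 + 1) ^ (1 / 2 : ℂ)) w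
  refine DifferentiableAt.const_mul ?_ _
  exact DifferentiableAt.cpow ((differentiableAt_id.pow 2).add_const 1)
    (differentiableAt_const _) (sq_add_one_mem_slitPlane hw)

lemma hSlit_differentiableAt {c : ℝ} (hc : 0 < c) {z : ℂ} (hz : ‖z‖ < 1) :
    DifferentiableAt ℂ (hSlit c) z := by
  have h1 := mSlit_differentiableAt (one_add_ne_of_abs_lt_one hz)
  have h2 := sSlit_differentiableAt (c := c) (re_mSlit_pos hz)
  have h3 := mSlit_differentiableAt (one_add_ne_of_re_pos (re_sSlit_pos hc (re_mSlit_pos hz)))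
  exact (h3.comp z (h2.comp z h1) : _)

lemma mSlit_ofReal (r : ℝ) : mSlit (r : ℂ) = (((1 - r) / (1 + r) : ℝ) : ℂ) := by
  simp only [mSlit]
  push_cast
  ring

lemma hSlit_continuousAt_bdry {c : ℝ} {z₀ : ℂ} (h1 : 1 + z₀ ≠ 0)
    (h2 : (mSlit z₀) ^ 2 + 1 = 0) : ContinuousAt (hSlit c) z₀ := by
  have c1 : ContinuousAt mSlit z₀ := mSlit_continuousAt h1
  have c2 : ContinuousAt (fun z : ℂ => (mSlit z) ^ 2 + 1) z₀ := by
    exact (c1.pow 2).add continuousAt_const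
  have c3 : ContinuousAt (fun u : ℂ => u ^ (1 / 2 : ℂ)) ((mSlit z₀) ^ 2 + 1) := by
    rw [h2]
    exact Complex.continuousAt_cpow_const_of_re_pos (Or.inl (by simp)) (by norm_num)
  have c4 : ContinuousAt (fun z : ℂ => ((mSlit z) ^ 2 + 1) ^ (1 / 2 : ℂ)) z₀ :=
    ContinuousAt.comp (f := fun z : ℂ => (mSlit z) ^ 2 + 1) c3 c2
  have c5 : ContinuousAt (fun z : ℂ => sSlit c (mSlit z)) z₀ := continuousAt_const.mul c4
  have hval : sSlit c (mSlit z₀) = 0 := by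
    rw [sSlit, h2, Complex.zero_cpow (by norm_num : (1/2 : ℂ) ≠ 0), mul_zero]
  have c6 : ContinuousAt mSlit (sSlit c (mSlit z₀)) := by
    rw [hval]
    exact mSlit_continuousAt (by norm_num)
  exact ContinuousAt.comp (f := fun z : ℂ => sSlit c (mSlit z)) c6 c5

lemma sSlit_inj {c : ℝ} (hc : 0 < c) {w1 w2 : ℂ} (h1 : 0 < w1.re) (h2 : 0 < w2.re)
    (h : sSlit c w1 = sSlit c w2) : w1 = w2 := by
  rw [sSlit, sSlit] at h
  have hc' : (c : ℂ) ≠ 0 := Complex.ofReal_ne_zero.mpr hc.ne'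
  have h' : (w1 ^ 2 + 1) ^ (1/2 : ℂ) = (w2 ^ 2 + 1) ^ (1/2 : ℂ) := mul_left_cancel₀ hc' h
  have hsq : w1 ^ 2 + 1 = w2 ^ 2 + 1 := by
    rw [← sq_half_cpow (w1 ^ 2 + 1), ← sq_half_cpow (w2 ^ 2 + 1), h']
  have hfac : (w1 - w2) * (w1 + w2) = 0 := by linear_combination hsq
  rcases mul_eq_zero.mp hfac with h'' | h''
  · linear_combination h''
  · exfalso
    have : (w1 + w2).re = 0 := by rw [h'']; simp
    simp only [Complex.add_re] at this
    linarith

set_option maxHeartbeats 2000000 in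
/-- For `β ∈ (-1,1)`, `c = (((1-β)/(1+β))² + 1)^{-1/2}` and
`t = (1-c)/(1+c)`, the map `h = m ∘ s ∘ m` (with `m(z) = (1-z)/(1+z)` and
`s(z) = c√(z²+1)`) is a holomorphic injective map of `𝔻` onto the slit disk
`D_t = 𝔻 \ [t,1)` with `h(β) = 0`, boundary value `h(1) = t`, and continuous boundary
extension at `±i` with `h(i) = h(-i) = 1`. -/
theorem stmt_12 (β c t : ℝ) (hβ₁ : -1 < β) (hβ₂ : β < 1)
    (hc : c = (((1 - β) / (1 + β)) ^ 2 + 1) ^ (-(1 / 2) : ℝ))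
    (ht : t = (1 - c) / (1 + c)) :
    DifferentiableOn ℂ (hSlit c) (Metric.ball 0 1) ∧
    Set.InjOn (hSlit c) (Metric.ball 0 1) ∧
    hSlit c '' Metric.ball 0 1
      = Metric.ball 0 1 \ ((fun r : ℝ => (r : ℂ)) '' Set.Ico t 1) ∧
    hSlit c β = 0 ∧
    hSlit c 1 = t ∧
    ContinuousWithinAt (hSlit c) (Metric.closedBall 0 1) Complex.I ∧
    ContinuousWithinAt (hSlit c) (Metric.closedBall 0 1) (-Complex.I) ∧
    hSlit c Complex.I = 1 ∧ hSlit c (-Complex.I) = 1 := by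
  have h1β : (0:ℝ) < 1 + β := by linarith
  have h2β : (0:ℝ) < 1 - β := by linarith
  set A : ℝ := (1 - β) / (1 + β) with hA_def
  have hA : 0 < A := by positivity
  have hbase : (0:ℝ) < A ^ 2 + 1 := by positivity
  have hc0 : 0 < c := by rw [hc]; exact Real.rpow_pos_of_pos hbase _
  have hc1 : c ≤ 1 := by
    rw [hc]
    exact Real.rpow_le_one_of_one_le_of_nonpos (by nlinarith) (by norm_num)
  have hkey : c * (A ^ 2 + 1) ^ ((1:ℝ)/2) = 1 := by
    rw [hc, ← Real.rpow_add hbase]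
    norm_num
  have h1c : (0:ℝ) < 1 + c := by linarith
  have ht0 : 0 ≤ t := by
    rw [ht]; exact div_nonneg (by linarith) h1c.le
  have ht1 : t < 1 := by
    rw [ht, div_lt_one h1c]; linarith
  have h1t : (0:ℝ) < 1 + t := by linarith
  have htc : (1 - t) / (1 + t) = c := by
    rw [ht]
    rw [div_eq_iff (by rw [ht] at h1t; exact h1t.ne')]
    field_simp
    ring
  have hball : ∀ z : ℂ, z ∈ Metric.ball (0:ℂ) 1 ↔ ‖z‖ < 1 := by
    intro z
    rw [Metric.mem_ball, Complex.dist_eq, sub_zero]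
  -- the nine goals
  refine ⟨?_, ?_, ?_, ?_, ?_, ?_, ?_, ?_, ?_⟩
  · -- DifferentiableOn
    intro z hz
    exact (hSlit_differentiableAt hc0 ((hball z).mp hz)).differentiableWithinAt
  · -- InjOn
    intro z1 hz1 z2 hz2 h
    rw [hball] at hz1 hz2
    have hw1 : 0 < (mSlit z1).re := re_mSlit_pos hz1
    have hw2 : 0 < (mSlit z2).re := re_mSlit_pos hz2
    have hv1 : 0 < (sSlit c (mSlit z1)).re := re_sSlit_pos hc0 hw1
    have hv2 : 0 < (sSlit c (mSlit z2)).re := re_sSlit_pos hc0 hw2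
    have hveq : sSlit c (mSlit z1) = sSlit c (mSlit z2) := by
      have e1 := mSlit_mSlit (one_add_ne_of_re_pos hv1)
      have e2 := mSlit_mSlit (one_add_ne_of_re_pos hv2)
      rw [← e1, ← e2]
      exact congrArg mSlit h
    have hweq : mSlit z1 = mSlit z2 := sSlit_inj hc0 hw1 hw2 hveq
    have e1 := mSlit_mSlit (one_add_ne_of_abs_lt_one hz1)
    have e2 := mSlit_mSlit (one_add_ne_of_abs_lt_one hz2)
    rw [← e1, ← e2]
    exact congrArg mSlit hweq
  · -- image
    ext u
    constructor
    · rintro ⟨z, hz, rfl⟩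
      rw [hball] at hz
      have hw : 0 < (mSlit z).re := re_mSlit_pos hz
      have hv : 0 < (sSlit c (mSlit z)).re := re_sSlit_pos hc0 hw
      refine ⟨(hball _).mpr (abs_mSlit_lt_one hv), ?_⟩
      rintro ⟨r, ⟨hrt, hr1⟩, hru⟩
      -- hru : (r:ℂ) = hSlit c z
      have hr0 : (0:ℝ) ≤ r := le_trans ht0 hrt
      have h1r : (0:ℝ) < 1 + r := by linarith
      set ρ : ℝ := (1 - r) / (1 + r) with hρ_def
      have hρ0 : 0 < ρ := div_pos (by linarith) h1r
      have hρc : ρ ≤ c := by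
        rw [← htc, hρ_def, div_le_div_iff₀ h1r h1t]
        nlinarith
      have hveq : sSlit c (mSlit z) = (ρ : ℂ) := by
        have e : mSlit (hSlit c z) = sSlit c (mSlit z) :=
          mSlit_mSlit (one_add_ne_of_re_pos hv)
        have h2 : mSlit (hSlit c z) = mSlit ((r : ℝ) : ℂ) := congrArg mSlit hru.symm
        calc sSlit c (mSlit z) = mSlit (hSlit c z) := e.symm
          _ = mSlit ((r : ℝ) : ℂ) := h2
          _ = (ρ : ℂ) := mSlit_ofReal r
      have hhalf : ((mSlit z) ^ 2 + 1) ^ (1/2 : ℂ) = ((ρ / c : ℝ) : ℂ) := by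
        have hc' : (c : ℂ) ≠ 0 := Complex.ofReal_ne_zero.mpr hc0.ne'
        rw [sSlit] at hveq
        push_cast
        rw [eq_div_iff hc', mul_comm]
        exact hveq
      have hsq : (mSlit z) ^ 2 = (((ρ / c) ^ 2 - 1 : ℝ) : ℂ) := by
        have h3 := sq_half_cpow ((mSlit z) ^ 2 + 1)
        rw [hhalf] at h3
        rw [Complex.ofReal_sub, Complex.ofReal_pow, Complex.ofReal_one]
        linear_combination -h3
      have hle : ((ρ / c) ^ 2 - 1 : ℝ) ≤ 0 := by
        have : ρ / c ≤ 1 := (div_le_one hc0).mpr hρc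
        have h2 : 0 < ρ / c := div_pos hρ0 hc0
        nlinarith
      exact sq_ne_real_nonpos hw hle hsq
    · rintro ⟨hu, hns⟩
      rw [hball] at hu
      set v : ℂ := mSlit u with hv_def
      have hvre : 0 < v.re := re_mSlit_pos hu
      have hc' : (c : ℂ) ≠ 0 := Complex.ofReal_ne_zero.mpr hc0.ne'
      have hqre : 0 < (v / (c : ℂ)).re := by
        rw [Complex.div_ofReal_re]
        positivity
      have hslit : (v / (c : ℂ)) ^ 2 - 1 ∈ Complex.slitPlane := by
        by_contra hnot
        rw [Complex.mem_slitPlane_iff] at hnot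
        push_neg at hnot
        obtain ⟨hre, him⟩ := hnot
        set q : ℂ := v / (c : ℂ) with hq_def
        have hqim : q.im = 0 := by
          have h1 : (q ^ 2 - 1).im = q.re * q.im + q.im * q.re := by
            rw [Complex.sub_im, sq, Complex.mul_im, Complex.one_im]; ring
          rw [him] at h1
          have h2 : q.re * q.im = 0 := by linarith
          rcases mul_eq_zero.mp h2 with h' | h'
          · exact absurd h' hqre.ne'
          · exact h'
        have hqre1 : q.re ≤ 1 := by
          have h1 : (q ^ 2 - 1).re = q.re * q.re - q.im * q.im - 1 := by
            rw [Complex.sub_re, sq, Complex.mul_re, Complex.one_re]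
          rw [hqim] at h1
          nlinarith
        have hvim : v.im = 0 := by
          have : v = (c : ℂ) * q := by rw [hq_def]; field_simp
          rw [this, Complex.im_ofReal_mul, hqim, mul_zero]
        have hvrec : v.re ≤ c := by
          have : v.re = c * q.re := by
            have hv' : v = (c : ℂ) * q := by rw [hq_def]; field_simp
            rw [hv', Complex.re_ofReal_mul]
          rw [this]
          nlinarith
        apply hns
        refine ⟨(1 - v.re) / (1 + v.re), ⟨?_, ?_⟩, ?_⟩
        · rw [ht, div_le_div_iff₀ h1c (by linarith)]
          nlinarith
        · rw [div_lt_one (by linarith)]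
          linarith
        · have hveq : v = ((v.re : ℝ) : ℂ) := Complex.ext (by simp) (by simp [hvim])
          have : mSlit v = u := by
            rw [hv_def]
            exact mSlit_mSlit (one_add_ne_of_abs_lt_one hu)
          rw [← this, hveq, mSlit_ofReal]
          simp
      set z0 : ℂ := ((v / (c : ℂ)) ^ 2 - 1) ^ (1/2 : ℂ) with hz0_def
      have hz0re : 0 < z0.re := re_half_cpow_pos hslit
      refine ⟨mSlit z0, (hball _).mpr (abs_mSlit_lt_one hz0re), ?_⟩
      show mSlit (sSlit c (mSlit (mSlit z0))) = u
      rw [mSlit_mSlit (one_add_ne_of_re_pos hz0re)]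
      have hs : sSlit c z0 = v := by
        rw [sSlit]
        have h1 : z0 ^ 2 + 1 = (v / (c : ℂ)) ^ 2 := by
          have := sq_half_cpow ((v / (c : ℂ)) ^ 2 - 1)
          rw [← hz0_def] at this
          rw [this]; ring
        rw [h1, half_cpow_sq hqre]
        field_simp
      rw [hs, hv_def]
      exact mSlit_mSlit (one_add_ne_of_abs_lt_one hu)
  · -- h β = 0
    have hmβ : mSlit (β : ℂ) = ((A : ℝ) : ℂ) := by
      rw [hA_def]
      simp only [mSlit]
      push_cast
      ring
    show mSlit (sSlit c (mSlit (β : ℂ))) = 0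
    rw [hmβ]
    have hsA : sSlit c ((A : ℝ) : ℂ) = 1 := by
      rw [sSlit]
      have h1 : ((A : ℂ) ^ 2 + 1) = (((A ^ 2 + 1 : ℝ)) : ℂ) := by push_cast; ring
      have h2 : (1/2 : ℂ) = ((1/2 : ℝ) : ℂ) := by norm_num
      rw [h1, h2, ← Complex.ofReal_cpow hbase.le, ← Complex.ofReal_mul]
      rw [show c * (A ^ 2 + 1) ^ (1/2 : ℝ) = 1 from hkey]
      exact Complex.ofReal_one
    rw [hsA]
    simp [mSlit]
  · -- h 1 = t
    show mSlit (sSlit c (mSlit 1)) = (t : ℂ)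
    have h1 : mSlit 1 = 0 := by simp [mSlit]
    rw [h1, sSlit]
    norm_num
    rw [mSlit_ofReal, ht]
  · -- continuity at I
    refine (hSlit_continuousAt_bdry ?_ ?_).continuousWithinAt
    · intro h
      have := congrArg Complex.im h
      simp at this
    · have hmI : mSlit Complex.I = -Complex.I := by
        rw [mSlit, div_eq_iff (by
          intro h
          have := congrArg Complex.im h
          simp at this)]
        linear_combination Complex.I_sq
      rw [hmI, neg_sq, Complex.I_sq]
      ring
  · -- continuity at -I
    refine (hSlit_continuousAt_bdry ?_ ?_).continuousWithinAt
    · intro h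
      have := congrArg Complex.im h
      simp at this
    · have hmI : mSlit (-Complex.I) = Complex.I := by
        rw [mSlit, div_eq_iff (by
          intro h
          have := congrArg Complex.im h
          simp at this)]
        linear_combination Complex.I_sq
      rw [hmI, Complex.I_sq]
      ring
  · -- h I = 1
    show mSlit (sSlit c (mSlit Complex.I)) = 1
    have hmI : mSlit Complex.I = -Complex.I := by
      rw [mSlit, div_eq_iff (by
        intro h
        have := congrArg Complex.im h
        simp at this)]
      linear_combination Complex.I_sq
    rw [hmI, sSlit]
    have h0 : (-Complex.I) ^ 2 + 1 = 0 := by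
      rw [neg_sq, Complex.I_sq]; ring
    rw [h0, Complex.zero_cpow (by norm_num : (1/2 : ℂ) ≠ 0), mul_zero]
    simp [mSlit]
  · -- h (-I) = 1
    show mSlit (sSlit c (mSlit (-Complex.I))) = 1
    have hmI : mSlit (-Complex.I) = Complex.I := by
      rw [mSlit, div_eq_iff (by
        intro h
        have := congrArg Complex.im h
        simp at this)]
      linear_combination Complex.I_sq
    rw [hmI, sSlit]
    have h0 : Complex.I ^ 2 + 1 = 0 := by
      rw [Complex.I_sq]; ring
    rw [h0, Complex.zero_cpow (by norm_num : (1/2 : ℂ) ≠ 0), mul_zero]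
    simp [mSlit]
end
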